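/- For a ≥ 0, an integer l ≥ 0, and a Schwartz function f on ℝ³, one has ‖∇^l f‖_{L²} ≤ C·‖∇^{l+1} f‖_{L²}^{1-θ}·‖Λ^{-a} f‖_{L²}^{θ} where θ = 1/(1+l+a), with a constant C independent of f. Here Λ^{-a} f is defined on the Fourier side by multiplication with |ξ|^{-a}. -/

import Mathlib

open Real MeasureTheory FourierTransform

/-- Fractional Gagliardo–Nirenberg interpolation (Lemma 2.3), stated on the Fourier side:
`‖∇^l f‖_{L²} ≤ C ‖∇^{l+1} f‖_{L²}^{1-θ} ‖Λ^{-a} f‖_{L²}^{θ}` with `θ = 1/(1+l+a)`,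
where by Plancherel `‖∇^m f‖_{L²} = ‖|ξ|^m f̂‖_{L²}` and `Λ^{-a}` is the Fourier
multiplier `|ξ|^{-a}`. -/
theorem stmt1 (a : ℝ) (ha : 0 ≤ a) (l : ℕ) :
    ∃ C > 0, ∀ f : SchwartzMap (EuclideanSpace ℝ (Fin 3)) ℂ,
      Integrable (fun ξ : EuclideanSpace ℝ (Fin 3) =>
        ‖ξ‖ ^ (-(2 * a)) * ‖𝓕 (⇑f : EuclideanSpace ℝ (Fin 3) → ℂ) ξ‖ ^ 2) →
      (∫ ξ : EuclideanSpace ℝ (Fin 3),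
          ‖ξ‖ ^ (2 * l : ℝ) * ‖𝓕 (⇑f : EuclideanSpace ℝ (Fin 3) → ℂ) ξ‖ ^ 2) ^ ((1 : ℝ) / 2)
        ≤ C *
          ((∫ ξ : EuclideanSpace ℝ (Fin 3),
              ‖ξ‖ ^ (2 * (l + 1) : ℝ) * ‖𝓕 (⇑f : EuclideanSpace ℝ (Fin 3) → ℂ) ξ‖ ^ 2) ^ ((1 : ℝ) / 2))
              ^ (1 - 1 / (1 + l + a)) *
          ((∫ ξ : EuclideanSpace ℝ (Fin 3),
              ‖ξ‖ ^ (-(2 * a)) * ‖𝓕 (⇑f : EuclideanSpace ℝ (Fin 3) → ℂ) ξ‖ ^ 2) ^ ((1 : ℝ) / 2))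
              ^ (1 / (1 + l + a)) := by
  refine ⟨1, one_pos, fun f hint => ?_⟩
  set F : EuclideanSpace ℝ (Fin 3) → ℂ := 𝓕 (⇑f : EuclideanSpace ℝ (Fin 3) → ℂ) with hF
  by_cases h0 : l = 0 ∧ a = 0
  · obtain ⟨hl, ha0⟩ := h0
    subst hl; subst ha0
    norm_num
  -- main case : θ < 1
  have hD : (1 : ℝ) < 1 + l + a := by
    rcases Nat.eq_zero_or_pos l with hl | hl
    · have : a ≠ 0 := fun h => h0 ⟨hl, h⟩
      have := lt_of_le_of_ne ha (Ne.symm this)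
      simp [hl]; linarith
    · have : (1:ℝ) ≤ l := by exact_mod_cast hl
      linarith
  set θ : ℝ := 1 / (1 + l + a) with hθdef
  have hθpos : 0 < θ := by positivity
  have hθlt : θ < 1 := by
    rw [hθdef, div_lt_one (by linarith)]; linarith
  have hθ1 : 0 < 1 - θ := by linarith
  -- the Fourier transform of f is a Schwartz function
  have hFs : F = ⇑(SchwartzMap.fourierTransformCLM ℂ f) := rfl
  set G : SchwartzMap (EuclideanSpace ℝ (Fin 3)) ℂ := SchwartzMap.fourierTransformCLM ℂ f
  -- integrands
  set g : EuclideanSpace ℝ (Fin 3) → ℝ := fun ξ => ‖ξ‖ ^ (2 * ((l : ℝ) + 1)) * ‖F ξ‖ ^ 2 with hg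
  set h : EuclideanSpace ℝ (Fin 3) → ℝ := fun ξ => ‖ξ‖ ^ (-(2 * a)) * ‖F ξ‖ ^ 2 with hh
  have hgnn : ∀ ξ, 0 ≤ g ξ := fun ξ => mul_nonneg (rpow_nonneg (norm_nonneg _) _) (by positivity)
  have hhnn : ∀ ξ, 0 ≤ h ξ := fun ξ => mul_nonneg (rpow_nonneg (norm_nonneg _) _) (by positivity)
  -- integrability of g
  have hgint : Integrable g := by
    have h1 : g = fun ξ => ‖ξ‖ ^ (2 * l + 2 : ℕ) * ‖F ξ‖ ^ 2 := by
      funext ξ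
      rw [hg, ← Real.rpow_natCast ‖ξ‖ (2 * l + 2)]
      push_cast
      ring_nf
    rw [h1]
    have hb : Integrable (fun ξ : EuclideanSpace ℝ (Fin 3) =>
        (SchwartzMap.seminorm ℝ 0 0) G * (‖ξ‖ ^ (2 * l + 2) * ‖G ξ‖)) :=
      (G.integrable_pow_mul volume (2 * l + 2)).const_mul _
    refine hb.mono' ?_ ?_
    · exact (Continuous.mul (by continuity) ((G.continuous.norm).pow 2)).aestronglyMeasurable
    · filter_upwards with ξ
      have hGb : ‖G ξ‖ ≤ (SchwartzMap.seminorm ℝ 0 0) G := by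
        simpa using G.le_seminorm ℝ 0 0 ξ
      have hx : (0:ℝ) ≤ ‖ξ‖ ^ (2 * l + 2) := pow_nonneg (norm_nonneg ξ) _
      have : ‖ξ‖ ^ (2 * l + 2) * ‖G ξ‖ ^ 2 ≤
          (SchwartzMap.seminorm ℝ 0 0) G * (‖ξ‖ ^ (2 * l + 2) * ‖G ξ‖) := by
        calc ‖ξ‖ ^ (2 * l + 2) * ‖G ξ‖ ^ 2
            = (‖ξ‖ ^ (2 * l + 2) * ‖G ξ‖) * ‖G ξ‖ := by ring
          _ ≤ (‖ξ‖ ^ (2 * l + 2) * ‖G ξ‖) * ((SchwartzMap.seminorm ℝ 0 0) G) :=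
              mul_le_mul_of_nonneg_left hGb (mul_nonneg hx (norm_nonneg _))
          _ = (SchwartzMap.seminorm ℝ 0 0) G * (‖ξ‖ ^ (2 * l + 2) * ‖G ξ‖) := by ring
      simpa [hFs, abs_of_nonneg (mul_nonneg (pow_nonneg (norm_nonneg ξ) _) (by positivity : (0:ℝ) ≤ ‖G ξ‖^2))] using this
  have hhint : Integrable h := hint
  -- MemLp facts
  have hp : (1 - θ)⁻¹.HolderConjugate θ⁻¹ := by
    rw [Real.holderConjugate_iff]
    constructor
    · rw [lt_inv_comm₀ one_pos hθ1]; simpa using hθpos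
    · rw [inv_inv, inv_inv]; ring
  have hgmeas := hgint.aestronglyMeasurable
  have hhmeas := hhint.aestronglyMeasurable
  have memg : MemLp (fun ξ => g ξ ^ (1 - θ)) (ENNReal.ofReal (1 - θ)⁻¹) volume := by
    have h1 : MemLp g 1 volume := memLp_one_iff_integrable.mpr hgint
    have h2 := (memLp_norm_rpow_iff (q := ENNReal.ofReal (1 - θ)) (p := 1) hgmeas
      (by simp [ENNReal.ofReal_eq_zero]; linarith) ENNReal.ofReal_ne_top).mpr h1
    have e1 : (fun ξ => ‖g ξ‖ ^ (ENNReal.ofReal (1 - θ)).toReal) = fun ξ => g ξ ^ (1 - θ) := by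
      funext ξ
      rw [ENNReal.toReal_ofReal hθ1.le, Real.norm_of_nonneg (hgnn ξ)]
    have e2 : (1 : ENNReal) / ENNReal.ofReal (1 - θ) = ENNReal.ofReal (1 - θ)⁻¹ := by
      rw [ENNReal.ofReal_inv_of_pos hθ1, one_div]
    rwa [e1, e2] at h2
  have memh : MemLp (fun ξ => h ξ ^ θ) (ENNReal.ofReal θ⁻¹) volume := by
    have h1 : MemLp h 1 volume := memLp_one_iff_integrable.mpr hhint
    have h2 := (memLp_norm_rpow_iff (q := ENNReal.ofReal θ) (p := 1) hhmeas
      (by simp [ENNReal.ofReal_eq_zero]; linarith) ENNReal.ofReal_ne_top).mpr h1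
    have e1 : (fun ξ => ‖h ξ‖ ^ (ENNReal.ofReal θ).toReal) = fun ξ => h ξ ^ θ := by
      funext ξ
      rw [ENNReal.toReal_ofReal hθpos.le, Real.norm_of_nonneg (hhnn ξ)]
    have e2 : (1 : ENNReal) / ENNReal.ofReal θ = ENNReal.ofReal θ⁻¹ := by
      rw [ENNReal.ofReal_inv_of_pos hθpos, one_div]
    rwa [e1, e2] at h2
  -- pointwise identity away from 0
  have key : ∀ ξ : EuclideanSpace ℝ (Fin 3), ξ ≠ 0 →
      ‖ξ‖ ^ (2 * l : ℝ) * ‖F ξ‖ ^ 2 = g ξ ^ (1 - θ) * h ξ ^ θ := by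
    intro ξ hξ
    have hr : (0:ℝ) < ‖ξ‖ := norm_pos_iff.mpr hξ
    have hn : (0:ℝ) ≤ ‖F ξ‖ := norm_nonneg _
    have hg' : g ξ ^ (1 - θ)
        = ‖ξ‖ ^ ((2 * ((l:ℝ) + 1)) * (1 - θ)) * ‖F ξ‖ ^ (((2:ℕ):ℝ) * (1 - θ)) := by
      rw [hg]
      simp only
      rw [← Real.rpow_natCast ‖F ξ‖ 2,
        Real.mul_rpow (Real.rpow_nonneg hr.le _) (Real.rpow_nonneg hn _),
        ← Real.rpow_mul hr.le, ← Real.rpow_mul hn]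
    have hh' : h ξ ^ θ
        = ‖ξ‖ ^ ((-(2 * a)) * θ) * ‖F ξ‖ ^ (((2:ℕ):ℝ) * θ) := by
      rw [hh]
      simp only
      rw [← Real.rpow_natCast ‖F ξ‖ 2,
        Real.mul_rpow (Real.rpow_nonneg hr.le _) (Real.rpow_nonneg hn _),
        ← Real.rpow_mul hr.le, ← Real.rpow_mul hn]
    rw [hg', hh']
    have eA : (2 * ((l:ℝ) + 1)) * (1 - θ) + (-(2 * a)) * θ = 2 * l := by
      rw [hθdef]
      have hne : (1:ℝ) + l + a ≠ 0 := by positivity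
      field_simp
      ring
    have eB : ((2:ℕ):ℝ) * (1 - θ) + ((2:ℕ):ℝ) * θ = 2 := by push_cast; ring
    calc ‖ξ‖ ^ (2 * l : ℝ) * ‖F ξ‖ ^ 2
        = ‖ξ‖ ^ ((2 * ((l:ℝ) + 1)) * (1 - θ) + (-(2 * a)) * θ)
          * ‖F ξ‖ ^ (((2:ℕ):ℝ) * (1 - θ) + ((2:ℕ):ℝ) * θ) := by
          rw [eA, eB, ← Real.rpow_natCast ‖F ξ‖ 2]
          norm_num
      _ = ‖ξ‖ ^ ((2 * ((l:ℝ) + 1)) * (1 - θ)) * ‖F ξ‖ ^ (((2:ℕ):ℝ) * (1 - θ))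
          * (‖ξ‖ ^ ((-(2 * a)) * θ) * ‖F ξ‖ ^ (((2:ℕ):ℝ) * θ)) := by
          rw [Real.rpow_add hr, Real.rpow_add' hn (by rw [eB]; norm_num)]
          ring
  -- a.e. identity
  have haeeq : (fun ξ : EuclideanSpace ℝ (Fin 3) => ‖ξ‖ ^ (2 * l : ℝ) * ‖F ξ‖ ^ 2)
      =ᵐ[volume] fun ξ => g ξ ^ (1 - θ) * h ξ ^ θ := by
    have h0m : volume ({(0 : EuclideanSpace ℝ (Fin 3))} : Set (EuclideanSpace ℝ (Fin 3))) = 0 :=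
      measure_singleton 0
    filter_upwards [compl_mem_ae_iff.mpr h0m] with ξ hξ
    exact key ξ hξ
  -- Hölder
  have hold := integral_mul_le_Lp_mul_Lq_of_nonneg (μ := volume) hp
      (Filter.Eventually.of_forall fun ξ => Real.rpow_nonneg (hgnn ξ) _)
      (Filter.Eventually.of_forall fun ξ => Real.rpow_nonneg (hhnn ξ) _) memg memh
  have e3 : (∫ ξ, (g ξ ^ (1 - θ)) ^ (1 - θ)⁻¹) = ∫ ξ, g ξ := by
    refine integral_congr_ae (Filter.Eventually.of_forall fun ξ => ?_)
    show (g ξ ^ (1 - θ)) ^ (1 - θ)⁻¹ = g ξ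
    rw [← Real.rpow_mul (hgnn ξ), mul_inv_cancel₀ (ne_of_gt hθ1), Real.rpow_one]
  have e4 : (∫ ξ, (h ξ ^ θ) ^ θ⁻¹) = ∫ ξ, h ξ := by
    refine integral_congr_ae (Filter.Eventually.of_forall fun ξ => ?_)
    show (h ξ ^ θ) ^ θ⁻¹ = h ξ
    rw [← Real.rpow_mul (hhnn ξ), mul_inv_cancel₀ (ne_of_gt hθpos), Real.rpow_one]
  rw [e3, e4, one_div, one_div, inv_inv, inv_inv] at hold
  have hmain : (∫ ξ : EuclideanSpace ℝ (Fin 3), ‖ξ‖ ^ (2 * l : ℝ) * ‖F ξ‖ ^ 2)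
      ≤ (∫ ξ, g ξ) ^ (1 - θ) * (∫ ξ, h ξ) ^ θ := by
    rw [integral_congr_ae haeeq]
    exact hold
  have hIg : 0 ≤ ∫ ξ, g ξ := integral_nonneg hgnn
  have hIh : 0 ≤ ∫ ξ, h ξ := integral_nonneg hhnn
  have hL : 0 ≤ ∫ ξ : EuclideanSpace ℝ (Fin 3), ‖ξ‖ ^ (2 * l : ℝ) * ‖F ξ‖ ^ 2 :=
    integral_nonneg fun ξ => mul_nonneg (Real.rpow_nonneg (norm_nonneg _) _) (by positivity)
  calc (∫ ξ : EuclideanSpace ℝ (Fin 3), ‖ξ‖ ^ (2 * l : ℝ) * ‖F ξ‖ ^ 2) ^ ((1:ℝ)/2)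
      ≤ ((∫ ξ, g ξ) ^ (1 - θ) * (∫ ξ, h ξ) ^ θ) ^ ((1:ℝ)/2) :=
        Real.rpow_le_rpow hL hmain (by norm_num)
    _ = 1 * ((∫ ξ, g ξ) ^ ((1:ℝ)/2)) ^ (1 - θ) * ((∫ ξ, h ξ) ^ ((1:ℝ)/2)) ^ θ := by
        rw [Real.mul_rpow (Real.rpow_nonneg hIg _) (Real.rpow_nonneg hIh _),
          ← Real.rpow_mul hIg, ← Real.rpow_mul hIh,
          mul_comm (1 - θ) ((1:ℝ)/2), mul_comm θ ((1:ℝ)/2),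
          Real.rpow_mul hIg, Real.rpow_mul hIh, one_mul]
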